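/- arXiv:1806.01208 — 4 statements merged into one kernel-verified Lean document; each statement's English description precedes it below -/
import Mathlib

section
/- Let d be a prime, f(x) = x^d + c with exact type (m,n), m ≥ 1, and suppose n | i with a_i periodic (m ≤ i ≤ m+n−1). Then there exists α ∈ O_K such that a_i^{d^{m−1}(d−1)} = d·(−a_{m−1}^{d−1} + α·a_i^d), where a_j = f^j(0) and K = ℚ(c). -/
open NumberField

lemma pow_add_factor {R : Type*} [CommRing R] (u v : R) (k : ℕ) :
    ∃ w, (u + v) ^ k = u ^ k + v * w := by
  induction k with
  | zero => exact ⟨0, by ring⟩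
  | succ k ih =>
    obtain ⟨w, hw⟩ := ih
    exact ⟨u * w + u ^ k + v * w, by rw [pow_succ, hw, pow_succ]; ring⟩

lemma prime_pow_add_factor {R : Type*} [CommRing R] {d : ℕ} (hd : d.Prime) (x y : R) :
    ∃ w, (x + y) ^ d = x ^ d + y ^ d + (d : R) * ((x * y) * w) := by
  have h := add_pow_prime_eq' hd x y
  have hdvd : (x * y) ∣ ∑ k ∈ Finset.Ioo 0 d, x ^ k * y ^ (d - k) * (d.choose k / d : ℕ) := by
    refine Finset.dvd_sum fun k hk => ?_
    rw [Finset.mem_Ioo] at hk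
    obtain ⟨k, rfl⟩ : ∃ k', k = k' + 1 := ⟨k - 1, by omega⟩
    obtain ⟨j, hj⟩ : ∃ j, d - (k + 1) = j + 1 := ⟨d - (k + 1) - 1, by omega⟩
    exact ⟨x ^ k * y ^ j * (d.choose (k + 1) / d : ℕ), by rw [hj]; ring⟩
  obtain ⟨w, hw⟩ := hdvd
  exact ⟨w, by rw [h, hw]⟩

lemma prime_sq_pow_add_factor {R : Type*} [CommRing R] {d : ℕ} (hd : d.Prime) (x y : R) :
    ∃ w, (x + y) ^ d = x ^ d + y ^ d + (d : R) * (x * y ^ (d - 1)) + (d : R) * (x ^ 2 * w) := by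
  have h := add_pow_prime_eq' hd x y
  have h1d : 1 < d := hd.one_lt
  have hsum : ∑ k ∈ Finset.Ioo 0 d, x ^ k * y ^ (d - k) * (d.choose k / d : ℕ)
      = x * y ^ (d - 1) +
        ∑ k ∈ Finset.Ioo 0 d \ {1}, x ^ k * y ^ (d - k) * (d.choose k / d : ℕ) := by
    rw [Finset.sum_eq_add_sum_sdiff_singleton_of_mem (i := 1) (by rw [Finset.mem_Ioo]; omega)]
    rw [Nat.choose_one_right, Nat.div_self hd.pos]
    simp
  have hdvd : (x ^ 2) ∣ ∑ k ∈ Finset.Ioo 0 d \ {1},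
      x ^ k * y ^ (d - k) * (d.choose k / d : ℕ) := by
    refine Finset.dvd_sum fun k hk => ?_
    rw [Finset.mem_sdiff, Finset.mem_Ioo, Finset.mem_singleton] at hk
    obtain ⟨k, rfl⟩ : ∃ k', k = k' + 2 := ⟨k - 2, by omega⟩
    exact ⟨x ^ k * y ^ (d - (k + 2)) * (d.choose (k + 2) / d : ℕ), by ring⟩
  obtain ⟨w, hw⟩ := hdvd
  refine ⟨w, ?_⟩
  rw [h, hsum, hw]
  ring

/-- Let `d` be a prime, `f(x) = x^d + c` with exact type `(m,n)`,
`m ≥ 1`, and suppose `n ∣ i` with `a_i` periodic (`m ≤ i ≤ m+n−1`). Then there is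
`α ∈ 𝓞 K` with `a_i^{d^{m−1}(d−1)} = d·(−a_{m−1}^{d−1} + α·a_i^d)`, where
`a_j = f^j(0)` and `K = ℚ(c)`. -/
theorem key_identity_prime_case {K : Type*} [Field K] [NumberField K]
    (d m n : ℕ) (hd : d.Prime) (hm : 1 ≤ m) (hn : 1 ≤ n)
    (c : 𝓞 K)
    (hK : IntermediateField.adjoin ℚ {algebraMap (𝓞 K) K c} = ⊤)
    (f : 𝓞 K → 𝓞 K) (hf : f = fun x => x ^ d + c)
    (a : ℕ → 𝓞 K) (ha : ∀ j, a j = f^[j] 0)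
    (hper : f^[m + n] 0 = f^[m] 0)
    (hmin : ∀ n', 0 < n' → n' < n → f^[m + n'] 0 ≠ f^[m] 0)
    (htail : ∀ k, k < m → f^[k + n] 0 ≠ f^[k] 0)
    (i : ℕ) (hni : n ∣ i) (hmi : m ≤ i) (him : i ≤ m + n - 1) :
    ∃ α : 𝓞 K,
      a i ^ (d ^ (m - 1) * (d - 1)) =
        (d : 𝓞 K) * (-(a (m - 1)) ^ (d - 1) + α * a i ^ d) := by
  have hd0 : d ≠ 0 := hd.ne_zero
  -- rule out m = 1
  rcases eq_or_lt_of_le hm with hm1 | hm2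
  · exfalso
    apply htail 0 (by omega)
    have h1 : f^[m + n] 0 = f (f^[n] 0) := by
      rw [show m + n = n + 1 by omega, Function.iterate_succ_apply']
    have h2 : f^[m] 0 = f 0 := by
      rw [show m = 0 + 1 by omega, Function.iterate_succ_apply']
      simp
    set x := f^[n] 0 with hx
    have hper' : f x = f 0 := by rw [← h1, ← h2]; exact hper
    rw [hf] at hper'
    simp only [] at hper'
    have hx0 : x ^ d = 0 := by
      have := add_right_cancel hper'
      rwa [zero_pow hd0] at this
    simpa using pow_eq_zero_iff hd0 |>.mp hx0
  -- now 2 ≤ m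
  have hm2' : 2 ≤ m := hm2
  -- periodicity
  have per : ∀ k, m ≤ k → f^[k + n] 0 = f^[k] 0 := by
    intro k hk
    rw [show k + n = (k - m) + (m + n) by omega, Function.iterate_add_apply, hper,
      ← Function.iterate_add_apply]
    congr 1
    omega
  have perq : ∀ q k, m ≤ k → f^[k + n * q] 0 = f^[k] 0 := by
    intro q
    induction q with
    | zero => simp
    | succ q ih =>
      intro k hk
      rw [show k + n * (q + 1) = (k + n) + n * q by ring, ih (k + n) (by omega), per k hk]
  obtain ⟨q, hq⟩ := hni
  have hq0 : q ≠ 0 := by rintro rfl; simp at hq; omega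
  obtain ⟨q, rfl⟩ : ∃ q', q = q' + 1 := ⟨q - 1, by omega⟩
  have him' : f^[m + i] 0 = f^[m] 0 := by rw [hq]; exact perq (q + 1) m le_rfl
  have him1 : f^[(m - 1) + i] 0 = f^[(m - 1) + n] 0 := by
    rw [show (m - 1) + i = ((m - 1) + n) + n * q by rw [hq, Nat.mul_succ]; omega]
    exact perq q ((m - 1) + n) (by omega)
  set A := f^[i] 0 with hA
  -- the divisibility claim
  have claim : ∀ j, 1 ≤ j → ∃ e t : 𝓞 K, f^[j + i] 0 = f^[j] 0 + e ∧
      e = A ^ d ^ j + (d : 𝓞 K) * (A ^ d * t) := by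
    intro j hj
    induction j, hj using Nat.le_induction with
    | base =>
      refine ⟨A ^ d, 0, ?_, by rw [pow_one]; ring⟩
      rw [show 1 + i = i + 1 by omega, Function.iterate_succ_apply',
        Function.iterate_one, ← hA, hf]
      simp only [zero_pow hd0]
      ring
    | succ j hj ih =>
      obtain ⟨e, t, h1, h2⟩ := ih
      set aj := f^[j] 0 with haj
      obtain ⟨w, hw⟩ := prime_pow_add_factor hd aj e
      obtain ⟨w2, hw2⟩ := pow_add_factor (A ^ d ^ j) ((d : 𝓞 K) * (A ^ d * t)) d
      have hpow : (A ^ d ^ j) ^ d = A ^ d ^ (j + 1) := by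
        rw [← pow_mul, ← pow_succ]
      have hdle : d ≤ d ^ j := by
        calc d = d ^ 1 := (pow_one d).symm
        _ ≤ d ^ j := Nat.pow_le_pow_right hd.pos hj
      have hsub : A ^ d ^ j = A ^ d * A ^ (d ^ j - d) := by
        rw [← pow_add, Nat.add_sub_cancel' hdle]
      refine ⟨A ^ d ^ (j + 1) + (d : 𝓞 K) * (A ^ d *
          (t * w2 + aj * ((A ^ (d ^ j - d) + (d : 𝓞 K) * t)) * w)),
        t * w2 + aj * ((A ^ (d ^ j - d) + (d : 𝓞 K) * t)) * w, ?_, rfl⟩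
      rw [show (j + 1) + i = (j + i) + 1 by omega, Function.iterate_succ_apply',
        Function.iterate_succ_apply' f j 0, h1, ← haj, hf]
      simp only []
      rw [hw, h2, hw2, hpow]
      linear_combination ((d : 𝓞 K) * aj * w) * hsub
  obtain ⟨e, t, h1, h2⟩ := claim (m - 1) (by omega)
  set aM := f^[m - 1] 0 with haM
  -- e ≠ 0
  have hene : e ≠ 0 := by
    intro h0
    apply htail (m - 1) (by omega)
    rw [← him1, h1, h0, add_zero]
  -- the vanishing equation
  obtain ⟨w, hw⟩ := prime_sq_pow_add_factor hd e aM
  have hz : (aM + e) ^ d = aM ^ d := by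
    have hL : f^[m + i] 0 = f (f^[(m - 1) + i] 0) := by
      rw [show m + i = ((m - 1) + i) + 1 by omega, Function.iterate_succ_apply']
    have hR : f^[m] 0 = f aM := by
      rw [haM, ← Function.iterate_succ_apply' f (m - 1) 0,
        show (m - 1).succ = m by omega]
    rw [hL, hR, h1, hf] at him'
    simp only [] at him'
    exact add_right_cancel him'
  have hed : e ^ d = e ^ (d - 1) * e := by
    conv_lhs => rw [show d = (d - 1) + 1 by omega]
    rw [pow_succ]
  have hzero : e * (e ^ (d - 1) + (d : 𝓞 K) * aM ^ (d - 1) + (d : 𝓞 K) * (e * w)) = 0 := by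
    linear_combination hz - hw - hed
  have hfac : e ^ (d - 1) + (d : 𝓞 K) * aM ^ (d - 1) + (d : 𝓞 K) * (e * w) = 0 := by
    rcases mul_eq_zero.mp hzero with h | h
    · exact absurd h hene
    · exact h
  -- expand e^(d-1)
  obtain ⟨r, hr⟩ := pow_add_factor (A ^ d ^ (m - 1)) ((d : 𝓞 K) * (A ^ d * t)) (d - 1)
  rw [← h2] at hr
  have hdle : d ≤ d ^ (m - 1) := by
    calc d = d ^ 1 := (pow_one d).symm
    _ ≤ d ^ (m - 1) := Nat.pow_le_pow_right hd.pos (by omega)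
  have hsub : A ^ d ^ (m - 1) = A ^ d * A ^ (d ^ (m - 1) - d) := by
    rw [← pow_add, Nat.add_sub_cancel' hdle]
  refine ⟨-((A ^ (d ^ (m - 1) - d) + (d : 𝓞 K) * t) * w) - t * r, ?_⟩
  rw [ha i, ha (m - 1), ← hA, ← haM, pow_mul]
  linear_combination hfac - hr - ((d : 𝓞 K) * w) * h2 - ((d : 𝓞 K) * w) * hsub
end

section
/- Let f(x) = x^d + c with exact type (m,n), m ≥ 1 (d ≥ 2 arbitrary). For the unique index i with m ≤ i ≤ m+n−1 and n | i, there exists α ∈ O_K such that d·a_{m−1}^{d−1} + a_i^{d^{m−1}(d−1)} = α·a_i^d, where a_j = f^j(0), K = ℚ(c). -/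
open NumberField

private lemma expand_pow {R : Type*} [CommRing R] (x y : R) (n : ℕ) :
    ∃ z : R, (x + y) ^ n = x ^ n + (n : R) * x ^ (n - 1) * y + y ^ 2 * z := by
  induction n with
  | zero => exact ⟨0, by simp⟩
  | succ s ih =>
    obtain ⟨z, hz⟩ := ih
    cases s with
    | zero => exact ⟨0, by push_cast; ring⟩
    | succ k =>
      refine ⟨x * z + ((k : R) + 1) * x ^ k + y * z, ?_⟩
      have h : (x + y) ^ (k + 1 + 1) = (x + y) * (x + y) ^ (k + 1) := by ring
      simp only [Nat.add_sub_cancel] at hz ⊢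
      rw [h, hz]
      push_cast
      ring

/-- Let `f(x) = x^d + c` with exact type `(m,n)`, `m ≥ 1` (`d ≥ 2`
arbitrary). For the unique index `i` with `m ≤ i ≤ m+n−1` and `n ∣ i`, there is
`α ∈ 𝓞 K` with `d·a_{m−1}^{d−1} + a_i^{d^{m−1}(d−1)} = α·a_i^d`, where
`a_j = f^j(0)` and `K = ℚ(c)`. -/
theorem key_identity_general_case {K : Type*} [Field K] [NumberField K]
    (d m n : ℕ) (hd : 2 ≤ d) (hm : 1 ≤ m) (hn : 1 ≤ n)
    (c : 𝓞 K)
    (hK : IntermediateField.adjoin ℚ {algebraMap (𝓞 K) K c} = ⊤)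
    (f : 𝓞 K → 𝓞 K) (hf : f = fun x => x ^ d + c)
    (a : ℕ → 𝓞 K) (ha : ∀ j, a j = f^[j] 0)
    (hper : f^[m + n] 0 = f^[m] 0)
    (hmin : ∀ n', 0 < n' → n' < n → f^[m + n'] 0 ≠ f^[m] 0)
    (htail : ∀ k, k < m → f^[k + n] 0 ≠ f^[k] 0)
    (i : ℕ) (hni : n ∣ i) (hmi : m ≤ i) (him : i ≤ m + n - 1) :
    ∃ α : 𝓞 K,
      (d : 𝓞 K) * a (m - 1) ^ (d - 1) + a i ^ (d ^ (m - 1) * (d - 1)) =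
        α * a i ^ d := by
  have hfx : ∀ x : 𝓞 K, f x = x ^ d + c := fun x => by rw [hf]
  have hd0 : d ≠ 0 := by omega
  -- tail periodicity
  have tail : ∀ k, m ≤ k → f^[k + n] 0 = f^[k] 0 := by
    intro k hk
    have h := congrArg (f^[k - m]) hper
    rw [← Function.iterate_add_apply, ← Function.iterate_add_apply,
      show k - m + (m + n) = k + n by omega, show k - m + m = k by omega] at h
    exact h
  have tailmul : ∀ k, m ≤ k → ∀ t, f^[k + t * n] 0 = f^[k] 0 := by
    intro k hk t
    induction t with
    | zero => simp
    | succ s ih =>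
      have h1 : k + (s + 1) * n = k + s * n + n := by ring
      rw [h1, tail (k + s * n) (by omega), ih]
  obtain ⟨t, ht⟩ := hni
  have ht1 : 1 ≤ t := by
    rcases Nat.eq_zero_or_pos t with h | h
    · subst h; omega
    · exact h
  set A : 𝓞 K := a i with hAdef
  have hA : A = f^[i] 0 := ha i
  -- f^[m] A = f^[m] 0
  have key : f^[m] A = f^[m] 0 := by
    rw [hA, ← Function.iterate_add_apply, show m + i = m + t * n by rw [ht]; ring]
    exact tailmul m le_rfl t
  -- A ≠ 0
  have hAne : A ≠ 0 := by
    intro h0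
    have h2 : f^[n + i] 0 = f^[n] 0 := by
      rw [Function.iterate_add_apply, ← hA, h0]
    have h3 : f^[n + i] 0 = f^[i] 0 := by rw [Nat.add_comm]; exact tail i hmi
    have h4 : f^[0 + n] 0 = f^[0] 0 := by
      simp only [Nat.zero_add, Function.iterate_zero_apply]
      rw [← h2, h3, ← hA, h0]
    exact htail 0 hm h4
  rcases Nat.lt_or_ge m 2 with hm1 | hm2
  · -- m = 1 : contradiction, since then A^d = 0
    exfalso
    have hm1' : m = 1 := by omega
    rw [hm1', Function.iterate_one, hfx A, hfx 0] at key
    have : A ^ d = 0 := by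
      have h0 : (0 : 𝓞 K) ^ d = 0 := zero_pow hd0
      have := key
      rw [h0] at this
      linear_combination this
    exact hAne (pow_eq_zero_iff hd0 |>.mp this)
  · -- m ≥ 2
    -- A^d divides f^[k] A - f^[k] 0 for k ≥ 1
    have hdvd : ∀ k, 1 ≤ k → A ^ d ∣ f^[k] A - f^[k] 0 := by
      intro k hk
      induction k with
      | zero => omega
      | succ s ih =>
        rcases Nat.eq_zero_or_pos s with hs | hs
        · subst hs
          show A ^ d ∣ f^[1] A - f^[1] 0
          simp only [Function.iterate_one, hfx]
          have : A ^ d + c - ((0 : 𝓞 K) ^ d + c) = A ^ d := by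
            rw [zero_pow hd0]; ring
          rw [this]
        · have hb := ih hs
          rw [Function.iterate_succ_apply', Function.iterate_succ_apply', hfx, hfx]
          have h5 : (f^[s] A) ^ d + c - ((f^[s] 0) ^ d + c) =
              (f^[s] A) ^ d - (f^[s] 0) ^ d := by ring
          rw [h5]
          exact hb.trans (sub_dvd_pow_sub_pow _ _ d)
    set u : 𝓞 K := f^[m - 1] 0 with hu
    set b : 𝓞 K := f^[m - 1] A - u with hbdef
    have hbdvd : A ^ d ∣ b := hdvd (m - 1) (by omega)
    -- b ≠ 0
    have hbne : b ≠ 0 := by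
      intro h0
      have h1 : f^[m - 1] A = f^[m - 1 + i] 0 := by
        rw [hA, ← Function.iterate_add_apply]
      have h2 : f^[m - 1 + i] 0 = f^[m - 1 + n] 0 := by
        obtain ⟨s, rfl⟩ : ∃ s, t = s + 1 := ⟨t - 1, by omega⟩
        rw [show m - 1 + i = m - 1 + n + s * n by rw [ht]; ring]
        exact tailmul (m - 1 + n) (by omega) s
      apply htail (m - 1) (by omega)
      rw [← h2, ← h1, ← sub_eq_zero]
      exact h0
    -- key identity
    have hiter : f^[m] A = f (f^[m - 1] A) := by
      rw [← Function.iterate_succ_apply' f (m - 1) A, Nat.succ_eq_add_one, Nat.sub_add_cancel hm]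
    have hiter0 : f^[m] 0 = f u := by
      rw [hu, ← Function.iterate_succ_apply' f (m - 1) 0, Nat.succ_eq_add_one, Nat.sub_add_cancel hm]
    have hub : f^[m - 1] A = u + b := by rw [hbdef]; ring
    have keq : (u + b) ^ d = u ^ d := by
      have := key
      rw [hiter, hiter0, hub, hfx, hfx] at this
      linear_combination this
    obtain ⟨z, hz⟩ := expand_pow u b d
    have hfac : b * ((d : 𝓞 K) * u ^ (d - 1) + b * z) = 0 := by
      rw [keq] at hz
      linear_combination -hz
    have hmain : (d : 𝓞 K) * u ^ (d - 1) = -(b * z) := by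
      rcases mul_eq_zero.mp hfac with h | h
      · exact absurd h hbne
      · linear_combination h
    -- A^d divides everything
    have hexp : d ≤ d ^ (m - 1) * (d - 1) := by
      have h1 : d ≤ d ^ (m - 1) := by
        calc d = d ^ 1 := (pow_one d).symm
        _ ≤ d ^ (m - 1) := Nat.pow_le_pow_right (by omega) (by omega)
      calc d ≤ d ^ (m - 1) := h1
      _ = d ^ (m - 1) * 1 := (Nat.mul_one _).symm
      _ ≤ d ^ (m - 1) * (d - 1) := Nat.mul_le_mul_left _ (by omega)
    have hd2 : A ^ d ∣ (d : 𝓞 K) * a (m - 1) ^ (d - 1) + a i ^ (d ^ (m - 1) * (d - 1)) := by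
      have hum : a (m - 1) = u := ha (m - 1)
      rw [hum, hmain, ← hAdef]
      apply dvd_add
      · exact dvd_neg.mpr (hbdvd.mul_right z)
      · exact pow_dvd_pow A hexp
    obtain ⟨α, hα⟩ := hd2
    exact ⟨α, by rw [hα]; ring⟩
end

section
/- For f(x) = x^d + c over a ring, the discriminants of iterates satisfy Disc(f^n) = ± Disc(f^{n−1})^d · d^{d^n} · a_n up to the precise sign/exponent convention, where a_n = f^n(0); in particular every prime dividing Disc(f^n) divides d·a_1·a_2⋯a_n. -/
open Polynomial NumberField

private lemma iterComp_map {R S : Type*} [CommRing R] [CommRing S] (φ : R →+* S)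
    (d : ℕ) (γ : R) (n : ℕ) :
    ((fun p => (X ^ d + C γ).comp p)^[n] (X : R[X])).map φ
      = (fun p => (X ^ d + C (φ γ)).comp p)^[n] (X : S[X]) := by
  induction n with
  | zero => simp
  | succ n ih =>
    rw [Function.iterate_succ_apply', Function.iterate_succ_apply',
      Polynomial.map_comp, ih]
    congr 1
    simp

private lemma iterComp_eval {R : Type*} [CommRing R] (d : ℕ) (γ : R) (n : ℕ) (x : R) :
    eval x ((fun p => (X ^ d + C γ).comp p)^[n] (X : R[X]))
      = (fun t => t ^ d + γ)^[n] x := by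
  induction n with
  | zero => simp
  | succ n ih =>
    rw [Function.iterate_succ_apply', Function.iterate_succ_apply', eval_comp, ih]
    simp

private lemma iterComp_deriv_eval {R : Type*} [CommRing R] (d : ℕ) (γ : R) (n : ℕ) (x : R) :
    eval x (derivative ((fun p => (X ^ d + C γ).comp p)^[n] (X : R[X])))
      = ∏ i ∈ Finset.range n, ((d : R) * ((fun t => t ^ d + γ)^[i] x) ^ (d - 1)) := by
  induction n with
  | zero => simp
  | succ n ih =>
    rw [Function.iterate_succ_apply', derivative_comp, eval_mul, eval_comp, ih,
      Finset.prod_range_succ]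
    have hder : derivative (X ^ d + C γ : R[X]) = C (d : R) * X ^ (d - 1) := by
      simp [derivative_X_pow]
    rw [hder, iterComp_eval]
    simp [mul_comm]

private lemma iterFun_map {R S FF : Type*} [CommRing R] [CommRing S]
    [FunLike FF R S] [RingHomClass FF R S] (φ : FF)
    (d : ℕ) (γ : R) (n : ℕ) (x : R) :
    φ ((fun t => t ^ d + γ)^[n] x) = (fun t => t ^ d + φ γ)^[n] (φ x) := by
  induction n with
  | zero => simp
  | succ n ih =>
    rw [Function.iterate_succ_apply', Function.iterate_succ_apply']
    simp [ih]

private lemma iterComp_monic {R : Type*} [CommRing R] [IsDomain R]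
    (d : ℕ) (hd : d ≠ 0) (γ : R) (n : ℕ) :
    ((fun p => (X ^ d + C γ).comp p)^[n] (X : R[X])).Monic ∧
      ((fun p => (X ^ d + C γ).comp p)^[n] (X : R[X])).natDegree ≠ 0 := by
  induction n with
  | zero => simpa using monic_X
  | succ n ih =>
    rw [Function.iterate_succ_apply']
    refine ⟨(monic_X_pow_add_C γ hd).comp ih.1 ih.2, ?_⟩
    rw [natDegree_comp, natDegree_X_pow_add_C]
    exact Nat.mul_ne_zero hd ih.2

private lemma coe_neg_one_pow_mul {R A : Type*} [CommRing R] [CommRing A] [Algebra R A]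
    (S : Subalgebra R A) (m : ℕ) (x : S) :
    (((-1 : S) ^ m * x : S) : A) = (-1 : A) ^ m * (x : A) := by
  push_cast
  ring

private lemma coe_nat_mul_pow {R A : Type*} [CommRing R] [CommRing A] [Algebra R A]
    (S : Subalgebra R A) (d k : ℕ) (x : S) :
    (((d : S) * x ^ k : S) : A) = (d : A) * (x : A) ^ k := by
  push_cast
  ring

private lemma multiset_prod_mem_prime {R : Type*} [CommRing R] {Q : Ideal R}
    (hQ : Q.IsPrime) (M : Multiset R) (h : M.prod ∈ Q) : ∃ x ∈ M, x ∈ Q := by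
  induction M using Multiset.induction with
  | empty =>
    rw [Multiset.prod_zero] at h
    exact absurd ((Ideal.eq_top_iff_one Q).mpr h) hQ.ne_top
  | cons a s ih =>
    rw [Multiset.prod_cons] at h
    rcases hQ.mem_or_mem h with h | h
    · exact ⟨a, Multiset.mem_cons_self a s, h⟩
    · obtain ⟨x, hx, hxQ⟩ := ih h
      exact ⟨x, Multiset.mem_cons_of_mem hx, hxQ⟩

private lemma finset_prod_mem_prime {R ι : Type*} [CommRing R] {Q : Ideal R}
    (hQ : Q.IsPrime) (s : Finset ι) (f : ι → R) (h : ∏ i ∈ s, f i ∈ Q) :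
    ∃ i ∈ s, f i ∈ Q := by
  classical
  induction s using Finset.induction with
  | empty =>
    rw [Finset.prod_empty] at h
    exact absurd ((Ideal.eq_top_iff_one Q).mpr h) hQ.ne_top
  | insert _ _ hnot ih =>
    rw [Finset.prod_insert hnot] at h
    rcases hQ.mem_or_mem h with h | h
    · exact ⟨_, Finset.mem_insert_self _ _, h⟩
    · obtain ⟨i, hi, hiQ⟩ := ih h
      exact ⟨i, Finset.mem_insert_of_mem hi, hiQ⟩

private lemma iterFun_sub_mem {R : Type*} [CommRing R] (Q : Ideal R) (d : ℕ) (γ : R)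
    (k : ℕ) {x y : R} (h : x - y ∈ Q) :
    (fun t => t ^ d + γ)^[k] x - (fun t => t ^ d + γ)^[k] y ∈ Q := by
  induction k with
  | zero => simpa using h
  | succ k ih =>
    rw [Function.iterate_succ_apply', Function.iterate_succ_apply']
    have heq : (fun t : R => t ^ d + γ) ((fun t => t ^ d + γ)^[k] x)
        - (fun t : R => t ^ d + γ) ((fun t => t ^ d + γ)^[k] y)
        = ((fun t : R => t ^ d + γ)^[k] x) ^ d - ((fun t : R => t ^ d + γ)^[k] y) ^ d := by
      simp only []
      ring
    rw [heq]
    obtain ⟨t, ht⟩ := sub_dvd_pow_sub_pow ((fun t : R => t ^ d + γ)^[k] x)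
      ((fun t : R => t ^ d + γ)^[k] y) d
    rw [ht]
    exact Ideal.mul_mem_right _ _ ih

set_option maxHeartbeats 2000000 in
set_option synthInstance.maxHeartbeats 400000 in
/-- For `f(x) = x^d + c` over a number field `K` (with `c` an algebraic
integer), any prime ideal of `𝓞 K` dividing `Disc(f^N)` divides the ideal
`(d · a_1 · a_2 ⋯ a_N)`, where `a_i = f^i(0)`. Here the discriminant of the monic
polynomial `F = f^N` is expressed by the standard formula
`Disc(F) = (−1)^(deg F (deg F − 1)/2) · ∏_{r root of F} F'(r)` (roots taken with
multiplicity in an algebraic closure of `K`). -/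
theorem prime_dvd_disc_iterate_dvd {K : Type*} [Field K] [NumberField K]
    (d N : ℕ) (hd : 2 ≤ d) (hN : 1 ≤ N)
    (c : 𝓞 K)
    (a : ℕ → 𝓞 K) (ha : ∀ i, a i = (fun x : 𝓞 K => x ^ d + c)^[i] 0)
    (F : K[X])
    (hF : F = (fun p => (X ^ d + C (algebraMap (𝓞 K) K c)).comp p)^[N] (X : K[X]))
    (D : 𝓞 K)
    (hD : algebraMap K (AlgebraicClosure K) (algebraMap (𝓞 K) K D) =
      (-1) ^ (F.natDegree * (F.natDegree - 1) / 2) *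
        ((F.aroots (AlgebraicClosure K)).map
          (fun r => Polynomial.aeval r (Polynomial.derivative F))).prod)
    (p : Ideal (𝓞 K)) (hp : p.IsPrime) (hp0 : p ≠ ⊥)
    (hdvd : D ∈ p) :
    (d : 𝓞 K) * ∏ i ∈ Finset.Icc 1 N, a i ∈ p := by
  classical
  have hd0 : d ≠ 0 := by omega
  set L := AlgebraicClosure K
  set A := integralClosure (𝓞 K) L with hA
  haveI : Algebra.IsIntegral (𝓞 K) A := le_integralClosure_iff_isIntegral.mp le_rfl
  -- injectivity of the algebra maps
  have hinj : Function.Injective (algebraMap (𝓞 K) L) := by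
    rw [IsScalarTower.algebraMap_eq (𝓞 K) K L]
    exact (algebraMap K L).injective.comp (IsFractionRing.injective (𝓞 K) K)
  have hinjA : Function.Injective (algebraMap (𝓞 K) A) := by
    intro x y hxy
    apply hinj
    rw [IsScalarTower.algebraMap_apply (𝓞 K) A L, IsScalarTower.algebraMap_apply (𝓞 K) A L, hxy]
  -- a prime of A over p
  obtain ⟨Q, -, hQprime, hQcomap⟩ :=
    Ideal.exists_ideal_over_prime_of_isIntegral p (⊥ : Ideal A) (by
      intro x hx
      rw [Ideal.mem_comap, Ideal.mem_bot] at hx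
      have hx0 : x = 0 := hinjA (by rw [hx, map_zero])
      rw [hx0]
      exact p.zero_mem)
  -- basic notation
  set cL : L := algebraMap (𝓞 K) L c with hcL
  have hFmap : F.map (algebraMap K L) = (fun p => (X ^ d + C cL).comp p)^[N] (X : L[X]) := by
    rw [hF, iterComp_map]
    rw [hcL, IsScalarTower.algebraMap_apply (𝓞 K) K L]
  -- the integral polynomial
  set Fz : (𝓞 K)[X] := (fun p => (X ^ d + C c).comp p)^[N] (X : (𝓞 K)[X]) with hFz
  have hFzmap : Fz.map (algebraMap (𝓞 K) K) = F := by
    rw [hFz, iterComp_map, hF]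
  have hFzL : Fz.map (algebraMap (𝓞 K) L) = F.map (algebraMap K L) := by
    rw [← hFzmap, Polynomial.map_map, ← IsScalarTower.algebraMap_eq]
  -- facts about roots
  have hroot : ∀ r ∈ F.aroots L, (fun t : L => t ^ d + cL)^[N] r = 0 := by
    intro r hr
    have := (Polynomial.mem_roots'.mp hr).2
    rw [Polynomial.IsRoot, hFmap, iterComp_eval] at this
    exact this
  have hint : ∀ r ∈ F.aroots L, IsIntegral (𝓞 K) r := by
    intro r hr
    refine ⟨Fz, (iterComp_monic d hd0 c N).1, ?_⟩
    rw [Polynomial.eval₂_eq_eval_map, hFzL]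
    exact (Polynomial.mem_roots'.mp hr).2
  -- the multiset of derivative values
  set M : Multiset L := (F.aroots L).map (fun r => Polynomial.aeval r (Polynomial.derivative F))
    with hM
  have hMA : ∀ x ∈ M, x ∈ A := by
    intro x hx
    obtain ⟨r, hr, rfl⟩ := Multiset.mem_map.mp hx
    have h1 : Polynomial.aeval r (Polynomial.derivative F)
        = Polynomial.aeval r (Polynomial.derivative Fz) := by
      rw [← hFzmap, Polynomial.derivative_map, aeval_map_algebraMap]
    rw [h1]
    exact adjoin_le_integralClosure (hint r hr) (Polynomial.aeval_mem_adjoin_singleton _ r)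
  set MA : Multiset A := M.pmap (fun x hx => (⟨x, hx⟩ : A)) hMA with hMA'
  have hMAcoe : ((MA.prod : A) : L) = M.prod := by
    have hgen : ∀ (s : Multiset L) (hs : ∀ x ∈ s, x ∈ A),
        (((s.pmap (fun x hx => (⟨x, hx⟩ : A)) hs).prod : A) : L) = s.prod := by
      intro s
      induction s using Multiset.induction with
      | empty => intro _; simp
      | cons b s ih =>
        intro hs
        rw [Multiset.pmap_cons, Multiset.prod_cons, Multiset.prod_cons,
          MulMemClass.coe_mul, ih (fun x hx => hs x (Multiset.mem_cons_of_mem hx))]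
    exact hgen M hMA
  -- D maps into Q
  have hDQ : algebraMap (𝓞 K) A D ∈ Q := by
    rw [← hQcomap] at hdvd
    exact hdvd
  -- the product is in Q
  set m : ℕ := F.natDegree * (F.natDegree - 1) / 2 with hm
  have hDL : algebraMap (𝓞 K) L D = (-1) ^ m * M.prod := by
    rw [IsScalarTower.algebraMap_apply (𝓞 K) K L]
    exact hD
  have hDA : algebraMap (𝓞 K) A D = (-1) ^ m * MA.prod := by
    apply Subtype.ext
    show algebraMap (𝓞 K) L D = (((-1) ^ m * MA.prod : A) : L)
    rw [coe_neg_one_pow_mul, hMAcoe]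
    exact hDL
  have hMAprodQ : MA.prod ∈ Q := by
    have h1 : MA.prod = (-1 : A) ^ m * algebraMap (𝓞 K) A D := by
      rw [hDA, ← mul_assoc, ← mul_pow]
      simp
    rw [h1]
    exact Ideal.mul_mem_left _ _ hDQ
  obtain ⟨xQ, hxQmem, hxQ⟩ := multiset_prod_mem_prime hQprime MA hMAprodQ
  obtain ⟨x, hxM, hxeq⟩ := Multiset.mem_pmap.mp hxQmem
  obtain ⟨r, hr, hrx⟩ := Multiset.mem_map.mp hxM
  -- r as an element of A
  have hrint : IsIntegral (𝓞 K) r := hint r hr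
  set rA : A := ⟨r, hrint⟩ with hrA
  set cA : A := algebraMap (𝓞 K) A c with hcA
  have hgcoe : ∀ (k : ℕ) (z : A),
      (((fun t : A => t ^ d + cA)^[k] z : A) : L)
        = (fun t : L => t ^ d + cL)^[k] ((z : A) : L) := by
    intro k z
    exact iterFun_map (A.val) d cA k z
  -- xQ equals the product of the factors
  have hxQeq : xQ = ∏ i ∈ Finset.range N,
      ((d : A) * ((fun t : A => t ^ d + cA)^[i] rA) ^ (d - 1)) := by
    subst hrx
    have hcoe : Polynomial.aeval r (Polynomial.derivative F) = ((xQ : A) : L) :=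
      congrArg Subtype.val hxeq
    apply Subtype.ext
    refine hcoe.symm.trans ?_
    have hstep : ((∏ i ∈ Finset.range N,
        ((d : A) * ((fun t : A => t ^ d + cA)^[i] rA) ^ (d - 1)) : A) : L)
        = ∏ i ∈ Finset.range N, ((d : L) * ((fun t : L => t ^ d + cL)^[i] r) ^ (d - 1)) := by
      rw [show ((∏ i ∈ Finset.range N,
          ((d : A) * ((fun t : A => t ^ d + cA)^[i] rA) ^ (d - 1)) : A) : L)
          = A.val (∏ i ∈ Finset.range N,
            ((d : A) * ((fun t : A => t ^ d + cA)^[i] rA) ^ (d - 1))) from rfl, map_prod]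
      refine Finset.prod_congr rfl fun i _ => ?_
      rw [show A.val ((d : A) * ((fun t : A => t ^ d + cA)^[i] rA) ^ (d - 1))
          = (((d : A) * ((fun t : A => t ^ d + cA)^[i] rA) ^ (d - 1) : A) : L) from rfl,
        coe_nat_mul_pow, hgcoe i rA]
    rw [hstep]
    have haev : Polynomial.aeval r (Polynomial.derivative F)
        = eval r (derivative (F.map (algebraMap K L))) := by
      rw [Polynomial.derivative_map, Polynomial.aeval_def, Polynomial.eval_map]
    rw [haev, hFmap, iterComp_deriv_eval]
  -- extract a factor in Q
  rw [hxQeq] at hxQ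
  obtain ⟨i, hiN, hiQ⟩ := finset_prod_mem_prime hQprime _ _ hxQ
  rw [Finset.mem_range] at hiN
  rcases hQprime.mem_or_mem hiQ with hdQ | hgQ
  · -- d ∈ Q, hence d ∈ p
    have hdp : (d : 𝓞 K) ∈ p := by
      rw [← hQcomap, Ideal.mem_comap, map_natCast]
      exact hdQ
    exact Ideal.mul_mem_right _ _ hdp
  · -- g^[i] rA ∈ Q
    have hgiQ : (fun t : A => t ^ d + cA)^[i] rA ∈ Q := hQprime.mem_of_pow_mem _ hgQ
    -- g^[N] rA = 0
    have hgN : (fun t : A => t ^ d + cA)^[N] rA = 0 := by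
      apply Subtype.ext
      rw [hgcoe]
      show (fun t : L => t ^ d + cL)^[N] r = ((0 : A) : L)
      rw [ZeroMemClass.coe_zero]
      exact hroot r hr
    -- congruence
    have hsub : (fun t : A => t ^ d + cA)^[i] rA - 0 ∈ Q := by simpa using hgiQ
    have hkey := iterFun_sub_mem Q d cA (N - i) hsub
    have hcomp : (fun t : A => t ^ d + cA)^[N - i] ((fun t : A => t ^ d + cA)^[i] rA)
        = 0 := by
      rw [← Function.iterate_add_apply, Nat.sub_add_cancel (le_of_lt hiN), hgN]
    rw [hcomp, zero_sub] at hkey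
    have haQ : (fun t : A => t ^ d + cA)^[N - i] (0 : A) ∈ Q := by
      simpa using Q.neg_mem hkey
    have haA : algebraMap (𝓞 K) A (a (N - i)) = (fun t : A => t ^ d + cA)^[N - i] (0 : A) := by
      rw [ha (N - i), iterFun_map (algebraMap (𝓞 K) A) d c (N - i) 0, map_zero, hcA]
    have hap : a (N - i) ∈ p := by
      rw [← hQcomap, Ideal.mem_comap, haA]
      exact haQ
    have hmem : N - i ∈ Finset.Icc 1 N := by
      rw [Finset.mem_Icc]
      omega
    obtain ⟨t, ht⟩ := Finset.dvd_prod_of_mem a hmem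
    rw [ht]
    exact Ideal.mul_mem_left _ _ (Ideal.mul_mem_right _ _ hap)
end

section
/- Let d be a prime and suppose x^d + c has exact type (m,1) with m ≥ 1, K = ℚ(c). Then d is totally ramified in K/ℚ, and for every i ≥ 1 the ideal (a_i) (with a_i = f^i(0)) is the unique prime ideal of O_K lying above d. -/
open NumberField

section Aux

open UniqueFactorizationMonoid in
lemma aux_count_ge_iff {R : Type*} [CommRing R] [IsDomain R] [IsDedekindDomain R]
    [DecidableEq (Ideal R)]
    {P : Ideal R} (hP : Prime P) {X : Ideal R} (hX : X ≠ 0) (s : ℕ) :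
    s ≤ (normalizedFactors X).count P ↔ X ≤ P ^ s := by
  rw [← Ideal.dvd_iff_le,
    dvd_iff_normalizedFactors_le_normalizedFactors (pow_ne_zero _ hP.ne_zero) hX,
    normalizedFactors_pow, normalizedFactors_irreducible hP.irreducible, normalize_eq,
    Multiset.nsmul_singleton, ← Multiset.le_count_iff_replicate_le]

lemma aux_pow_sub_mem {R : Type*} [CommRing R] {d : ℕ} (hd : d.Prime) {x y : R}
    {J : Ideal R} (hx : x ∈ J) (hy : y ∈ J) :
    x ^ d - y ^ d - (x - y) ^ d ∈ Ideal.span {(d : R)} * (J * J) := by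
  have hexp : (x - y) ^ d
      = ∑ i ∈ Finset.range (d + 1), x ^ i * (-y) ^ (d - i) * (d.choose i) := by
    rw [sub_eq_add_neg, add_pow]
  have hsplit : x ^ d - y ^ d - (x - y) ^ d
      = (-(y ^ d + (-y) ^ d))
        + ∑ i ∈ Finset.Ico 1 d, (-(x ^ i * (-y) ^ (d - i) * (d.choose i))) := by
    rw [hexp, Finset.sum_range_succ, Finset.range_eq_Ico,
      Finset.sum_eq_sum_Ico_succ_bot hd.pos, Finset.sum_neg_distrib]
    simp [Nat.choose_self, Nat.sub_self]
    ring
  rw [hsplit]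
  refine Submodule.add_mem _ ?_ (Ideal.sum_mem _ fun i hi => Submodule.neg_mem _ ?_)
  · rcases hd.eq_two_or_odd' with h2 | hodd
    · subst h2
      have : -(y ^ 2 + (-y) ^ 2) = ((2:ℕ) : R) * (-y * y) := by push_cast; ring
      rw [this]
      exact Ideal.mul_mem_mul (Ideal.mem_span_singleton_self _)
        (Ideal.mul_mem_mul (Submodule.neg_mem _ hy) hy)
    · rw [hodd.neg_pow]
      simp
  · simp only [Finset.mem_Ico] at hi
    obtain ⟨e, he⟩ := hd.dvd_choose_self (by omega) hi.2
    have : x ^ i * (-y) ^ (d - i) * (d.choose i)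
        = ((d : R) * e) * ((x * x ^ (i-1)) * (-y * (-y) ^ (d - i - 1))) := by
      rw [he]
      push_cast
      rw [← pow_succ' x, ← pow_succ' (-y)]
      rw [Nat.sub_add_cancel hi.1, Nat.sub_add_cancel (by omega)]
      ring
    rw [this]
    exact Ideal.mul_mem_mul (Ideal.mul_mem_right _ _ (Ideal.mem_span_singleton_self _))
      (Ideal.mul_mem_mul (Ideal.mul_mem_right _ _ hx)
        (Ideal.mul_mem_right _ _ (Submodule.neg_mem _ hy)))

lemma aux_assoc_zeta {R : Type*} [CommRing R] [IsDomain R] {d : ℕ} (hd : d.Prime)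
    {ζ : R} (h1 : ζ ^ d = 1) (h2 : ζ ≠ 1) :
    Associated ((1 - ζ) ^ (d - 1)) ((d : ℕ) : R) := by
  have horder : orderOf ζ = d := by
    rcases (Nat.Prime.eq_one_or_self_of_dvd hd _ (orderOf_dvd_of_pow_eq_one h1)) with h | h
    · exact absurd (orderOf_eq_one_iff.mp h) h2
    · exact h
  have hprim : IsPrimitiveRoot ζ d := horder ▸ IsPrimitiveRoot.orderOf ζ
  have hfac : ∀ k, 1 ≤ k → k < d → Associated (1 - ζ) (1 - ζ ^ k) := by
    intro k hk1 hkd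
    have hcop : Nat.Coprime k d := by
      rcases (Nat.coprime_or_dvd_of_prime hd k) with h | h
      · exact h.symm
      · exact absurd (Nat.le_of_dvd (by omega) h) (by omega)
    refine associated_of_dvd_dvd ⟨∑ j ∈ Finset.range k, ζ ^ j, ?_⟩ ?_
    · linear_combination geom_sum_mul ζ k
    · obtain ⟨k', -, hk'⟩ := Nat.exists_mul_mod_eq_one_of_coprime hcop hd.one_lt
      have hzk : (ζ ^ k) ^ k' = ζ := by
        rw [← pow_mul]
        conv_rhs => rw [← pow_one ζ]
        conv_lhs => rw [← Nat.div_add_mod (k * k') d, hk']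
        rw [pow_add, pow_mul, h1, one_pow, one_mul]
      refine ⟨∑ j ∈ Finset.range k', (ζ ^ k) ^ j, ?_⟩
      have hgs := geom_sum_mul (ζ ^ k) k'
      rw [hzk] at hgs
      linear_combination hgs
  have hprod : ∏ k ∈ Finset.range (d - 1), (1 - ζ ^ (k + 1)) = ((d : ℕ) : R) := by
    have hd1 : d - 1 + 1 = d := Nat.succ_pred_eq_of_pos hd.pos
    have hprim' : IsPrimitiveRoot ζ (d - 1 + 1) := by rw [hd1]; exact hprim
    rw [hprim'.prod_one_sub_pow_eq_order, Nat.cast_sub hd.one_le]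
    push_cast
    ring
  have hconst : (1 - ζ) ^ (d - 1) = ∏ _k ∈ Finset.range (d - 1), (1 - ζ) := by
    rw [Finset.prod_const, Finset.card_range]
  rw [hconst, ← hprod]
  exact Associated.prod (Finset.range (d - 1)) _ _
    (fun k hk => hfac (k + 1) (by omega) (by simp only [Finset.mem_range] at hk; omega))

lemma aux_mem_prime {R : Type*} [CommRing R] [IsDomain R] {d : ℕ} (hd : d.Prime)
    (a : ℕ → R) (ha0 : a 0 = 0) (harec : ∀ k, a (k + 1) = a k ^ d + a 1)
    (m : ℕ) (hper : a (m + 1) = a m)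
    {q : Ideal R} (hq : q.IsPrime) (hdq : ((d : ℕ) : R) ∈ q) : a 1 ∈ q := by
  haveI := Fact.mk hd
  set Q := R ⧸ q with hQ
  haveI : Nontrivial Q := Ideal.Quotient.nontrivial_iff.mpr hq.ne_top
  have hq0 : ((d : ℕ) : Q) = 0 := by
    rw [← map_natCast (Ideal.Quotient.mk q)]
    exact Ideal.Quotient.eq_zero_iff_mem.mpr hdq
  haveI hric : CharP Q (ringChar Q) := ringChar.charP Q
  have hdvd : ringChar Q ∣ d := (CharP.cast_eq_zero_iff Q (ringChar Q) d).mp hq0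
  rcases hd.eq_one_or_self_of_dvd _ hdvd with h1 | hdd
  · exact absurd h1 (CharP.char_ne_one Q (ringChar Q))
  · haveI : CharP Q d := by rw [← hdd]; exact ringChar.charP Q
    have key : ∀ k, Ideal.Quotient.mk q (a (k + 1) - a k)
        = (Ideal.Quotient.mk q (a 1)) ^ (d ^ k) := by
      intro k
      induction k with
      | zero => rw [ha0, sub_zero, pow_zero, pow_one]
      | succ k ih =>
        have hstep : a (k + 1 + 1) - a (k + 1) = a (k + 1) ^ d - a k ^ d := by
          rw [harec (k + 1), harec k]; ring
        rw [hstep, map_sub, map_pow, map_pow, ← sub_pow_char, ← map_sub, ih, ← pow_mul,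
          ← pow_succ]
    have h0 : (Ideal.Quotient.mk q (a 1)) ^ (d ^ m) = 0 := by
      rw [← key m, hper, sub_self, map_zero]
    have := pow_eq_zero_iff (pow_ne_zero m hd.ne_zero) |>.mp h0
    exact Ideal.Quotient.eq_zero_iff_mem.mp this

end Aux

/-- Let `d` be a prime and suppose `x^d + c` has exact type `(m,1)` with
`m ≥ 1`, `K = ℚ(c)`. Then `d` is totally ramified in `K/ℚ` and, for every `i ≥ 1`,
the ideal `(a_i)` (with `a_i = f^i(0)`) is the unique prime ideal of `𝓞 K` lying
above `d`: it is prime, `(d) = (a_i)^[K:ℚ]`, and any prime ideal containing `d`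
equals `(a_i)`. -/
theorem totally_ramified_of_exact_type_m_one {K : Type*} [Field K] [NumberField K]
    (d m : ℕ) (hd : d.Prime) (hm : 1 ≤ m)
    (c : 𝓞 K)
    (hK : IntermediateField.adjoin ℚ {algebraMap (𝓞 K) K c} = ⊤)
    (f : 𝓞 K → 𝓞 K) (hf : f = fun x => x ^ d + c)
    (a : ℕ → 𝓞 K) (ha : ∀ i, a i = f^[i] 0)
    (hper : f^[m + 1] 0 = f^[m] 0)
    (htail : ∀ k, k < m → f^[k + 1] 0 ≠ f^[k] 0)
    (i : ℕ) (hi : 1 ≤ i) :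
    (Ideal.span {a i}).IsPrime ∧
    Ideal.span {(d : 𝓞 K)} = (Ideal.span {a i}) ^ (Module.finrank ℚ K) ∧
    ∀ q : Ideal (𝓞 K), q.IsPrime → (d : 𝓞 K) ∈ q → q = Ideal.span {a i} := by
  classical
  have hd2 : 2 ≤ d := hd.two_le
  have ha0 : a 0 = 0 := by rw [ha 0]; rfl
  have ha1 : a 1 = c := by
    rw [ha 1, Function.iterate_one, hf]
    simp [zero_pow hd.ne_zero]
  have harec : ∀ k, a (k + 1) = a k ^ d + a 1 := by
    intro k
    rw [ha (k + 1), Function.iterate_succ_apply', ← ha k, hf, ha1]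
  have hper' : a (m + 1) = a m := by rw [ha, ha]; exact hper
  have htail' : ∀ k, k < m → a (k + 1) ≠ a k := fun k hk => by
    rw [ha, ha]; exact htail k hk
  have ha1ne : a 1 ≠ 0 := by
    have := htail' 0 hm
    rwa [ha0] at this
  have hm2 : 2 ≤ m := by
    by_contra h
    have hm1 : m = 1 := by omega
    subst hm1
    have h2 := hper'
    rw [harec 1] at h2
    have : a 1 ^ d = 0 := by linear_combination h2
    exact ha1ne (pow_eq_zero_iff hd.ne_zero |>.mp this)
  have hstab : ∀ k, m ≤ k → a k = a m := by
    intro k hk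
    induction k with
    | zero => omega
    | succ k ih =>
      rcases Nat.eq_or_lt_of_le hk with h | h
      · rw [← h]
      · have hmk : m ≤ k := by omega
        rw [harec k, ih hmk, ← harec m, hper']
  have h1dvd : ∀ k, a 1 ∣ a k := by
    intro k
    induction k with
    | zero => rw [ha0]; exact dvd_zero _
    | succ k ih => rw [harec k]; exact dvd_add (ih.pow hd.ne_zero) dvd_rfl
  have hiter : ∀ (x y : 𝓞 K) (j : ℕ), (x - y) ∣ (f^[j] x - f^[j] y) := by
    intro x y j
    induction j with
    | zero => simp
    | succ j ih =>
      have hfsub : ∀ X Y : 𝓞 K, f X - f Y = X ^ d - Y ^ d := by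
        intro X Y; simp only [hf]; ring
      rw [Function.iterate_succ_apply', Function.iterate_succ_apply', hfsub]
      exact ih.trans (sub_dvd_pow_sub_pow _ _ d)
  have hdvd_mul : ∀ j k, a j ∣ a (k * j) := by
    intro j k
    induction k with
    | zero => rw [Nat.zero_mul, ha0]; exact dvd_zero _
    | succ k ih =>
      have h1 : f^[(k + 1) * j] (0 : 𝓞 K) = f^[j] (f^[k * j] 0) := by
        rw [← Function.iterate_add_apply]
        congr 1
        ring
      have h2 : a j ∣ (f^[j] (f^[k * j] 0) - f^[j] 0) := by
        refine dvd_trans ?_ (hiter (f^[k * j] 0) 0 j)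
        rw [sub_zero, ← ha (k * j)]
        exact ih
      have h3 : a ((k + 1) * j) = (f^[j] (f^[k * j] 0) - f^[j] 0) + a j := by
        rw [ha ((k + 1) * j), h1, ha j]
        ring
      rw [h3]
      exact dvd_add h2 dvd_rfl
  have hdvdm : ∀ j, 1 ≤ j → a j ∣ a m := by
    intro j hj
    have := hdvd_mul j m
    rwa [hstab (m * j) (Nat.le_mul_of_pos_right m hj)] at this
  have hd1succ : d - 1 + 1 = d := Nat.succ_pred_eq_of_pos hd.pos
  have hm1 : a m ∣ a 1 := by
    refine ⟨1 - a m ^ (d - 1), ?_⟩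
    have h := harec m
    rw [hper'] at h
    have hpow : a m ^ d = a m ^ (d - 1) * a m := by
      conv_lhs => rw [← hd1succ]
      rw [pow_succ]
    rw [hpow] at h
    linear_combination -h
  have hassoc : ∀ j, 1 ≤ j → Associated (a 1) (a j) := fun j hj =>
    associated_of_dvd_dvd (h1dvd j) ((hdvdm j hj).trans hm1)
  have haine : ∀ j, 1 ≤ j → a j ≠ 0 := fun j hj h0 =>
    ha1ne ((hassoc j hj).eq_zero_iff.mpr h0)
  -- the root of unity
  have hm1pos : 1 ≤ m - 1 := by omega
  have hm1lt : m - 1 < m := by omega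
  have hm1succ : m - 1 + 1 = m := by omega
  obtain ⟨u, hu⟩ : Associated (a (m - 1)) (a m) :=
    ((hassoc (m - 1) hm1pos).symm.trans (hassoc m (by omega)))
  set ζ : 𝓞 K := (u : 𝓞 K) with hζdef
  have hpowd : a m ^ d = a (m - 1) ^ d := by
    have h1 := harec m
    rw [hper'] at h1
    have h2 := harec (m - 1)
    rw [hm1succ] at h2
    linear_combination h2 - h1
  have hζd : ζ ^ d = 1 := by
    have h := hpowd
    rw [← hu, mul_pow] at h
    have hz : a (m - 1) ^ d ≠ 0 := pow_ne_zero _ (haine (m - 1) hm1pos)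
    exact mul_left_cancel₀ hz (by rw [h, mul_one])
  have hζ1 : ζ ≠ 1 := by
    intro h
    refine htail' (m - 1) hm1lt ?_
    rw [hm1succ, ← hu, h, mul_one]
  have hAssocD : Associated ((1 - ζ) ^ (d - 1)) ((d : ℕ) : 𝓞 K) := aux_assoc_zeta hd hζd hζ1
  have hζne : (1 : 𝓞 K) - ζ ≠ 0 := sub_ne_zero.mpr (Ne.symm hζ1)
  have hdO : ((d : ℕ) : 𝓞 K) ≠ 0 := Nat.cast_ne_zero.mpr hd.ne_zero
  -- ideals
  set I : Ideal (𝓞 K) := Ideal.span {a 1} with hIdef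
  set J : Ideal (𝓞 K) := Ideal.span {((d : ℕ) : 𝓞 K)} with hJdef
  set Z : Ideal (𝓞 K) := Ideal.span {(1 : 𝓞 K) - ζ} with hZdef
  have hIne : I ≠ 0 := by
    simp only [hIdef, ne_eq, Ideal.span_singleton_eq_bot, Submodule.zero_eq_bot]
    exact ha1ne
  have hJne : J ≠ 0 := by
    simp only [hJdef, ne_eq, Ideal.span_singleton_eq_bot, Submodule.zero_eq_bot]
    exact hdO
  have hZne : Z ≠ 0 := by
    simp only [hZdef, ne_eq, Ideal.span_singleton_eq_bot, Submodule.zero_eq_bot]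
    exact hζne
  have hspan_i : ∀ j, 1 ≤ j → Ideal.span {a j} = I :=
    fun j hj => Ideal.span_singleton_eq_span_singleton.mpr (hassoc j hj).symm
  have hJZ : J = Z ^ (d - 1) := by
    rw [hZdef, Ideal.span_singleton_pow]
    exact (Ideal.span_singleton_eq_span_singleton.mpr hAssocD).symm
  set N : ℕ := (d ^ (m - 1) - 1) * (d - 1) with hNdef
  have hq1 : 1 ≤ d ^ (m - 1) := Nat.one_le_pow _ _ hd.pos
  have hq2 : d ≤ d ^ (m - 1) := by
    conv_lhs => rw [← pow_one d]
    exact Nat.pow_le_pow_right hd.pos hm1pos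
  have hN1 : 1 ≤ N := by
    have : 1 * 1 ≤ (d ^ (m - 1) - 1) * (d - 1) := Nat.mul_le_mul (by omega) (by omega)
    omega
  -- difference sequence
  set b : ℕ → 𝓞 K := fun k => a (k + 1) - a k with hbdef
  have hbne : ∀ k, k < m → b k ≠ 0 := fun k hk => sub_ne_zero.mpr (htail' k hk)
  have hbm : b (m - 1) = a (m - 1) * (ζ - 1) := by
    show a (m - 1 + 1) - a (m - 1) = _
    rw [hm1succ, ← hu]
    ring
  have hb1 : b 1 = a 1 ^ d := by
    show a (1 + 1) - a 1 = _
    rw [harec 1]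
    ring
  have hbrec : ∀ k, b (k + 1) = a (k + 1) ^ d - a k ^ d := by
    intro k
    show a (k + 1 + 1) - a (k + 1) = _
    rw [harec (k + 1), harec k]
    ring
  -- the key prime-by-prime inequality
  have hkey : ∀ P : Ideal (𝓞 K), Prime P →
      N * (UniqueFactorizationMonoid.normalizedFactors I).count P
        ≤ (UniqueFactorizationMonoid.normalizedFactors J).count P := by
    intro P hP
    set t := (UniqueFactorizationMonoid.normalizedFactors I).count P with htdef
    set e := (UniqueFactorizationMonoid.normalizedFactors J).count P with hedef
    set r := (UniqueFactorizationMonoid.normalizedFactors Z).count P with hrdef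
    by_cases ht0 : t = 0
    · rw [ht0, Nat.mul_zero]; exact Nat.zero_le _
    have ht1 : 1 ≤ t := by omega
    have hmemI : I ≤ P ^ t := (aux_count_ge_iff hP hIne t).mp le_rfl
    have hmemJ : J ≤ P ^ e := (aux_count_ge_iff hP hJne e).mp le_rfl
    have he_r : e = (d - 1) * r := by
      rw [hedef, hrdef, hJZ, UniqueFactorizationMonoid.normalizedFactors_pow,
        Multiset.count_nsmul]
    have hat : ∀ j, 1 ≤ j → a j ∈ P ^ t := by
      intro j _
      refine hmemI ?_
      rw [hIdef]
      exact Ideal.mem_span_singleton.mpr (h1dvd j)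
    have hnub : (UniqueFactorizationMonoid.normalizedFactors (Ideal.span {b (m - 1)})).count P
        = t + r := by
      have hsp : Ideal.span {b (m - 1)} = I * Z := by
        rw [hIdef, hZdef, Ideal.span_singleton_mul_span_singleton, hbm]
        exact Ideal.span_singleton_eq_span_singleton.mpr
          (Associated.mul_mul ((hassoc (m - 1) hm1pos).symm) ⟨-1, by simp⟩)
      rw [hsp, UniqueFactorizationMonoid.normalizedFactors_mul hIne hZne, Multiset.count_add]
    have hchain : ∀ k, 1 ≤ k → k ≤ m - 1 → b k ∈ P ^ (min (d ^ k * t) (e + 2 * t)) := by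
      intro k
      induction k with
      | zero => omega
      | succ k ih =>
        intro _ hk2
        by_cases hk0 : k = 0
        · subst hk0
          have h1 : a 1 ^ d ∈ P ^ (t * d) := by
            rw [pow_mul]
            exact Ideal.pow_mem_pow (hat 1 le_rfl) d
          rw [hb1]
          have hle : min (d ^ 1 * t) (e + 2 * t) ≤ t * d := by
            rw [pow_one, mul_comm]
            exact min_le_left _ _
          exact Ideal.pow_le_pow_right hle h1
        · have ihk := ih (by omega) (by omega)
          have hsplit : b (k + 1) = b k ^ d + (a (k + 1) ^ d - a k ^ d - b k ^ d) := by
            rw [hbrec k]; ring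
          have hE : a (k + 1) ^ d - a k ^ d - (a (k + 1) - a k) ^ d
              ∈ Ideal.span {((d : ℕ) : 𝓞 K)} * (P ^ t * P ^ t) :=
            aux_pow_sub_mem hd (hat (k + 1) (by omega)) (hat k (by omega))
          have hbk_eq : b k = a (k + 1) - a k := rfl
          rw [← hbk_eq, ← hJdef] at hE
          have hPP : P ^ t * P ^ t = P ^ (2 * t) := by rw [two_mul, pow_add]
          have hle1 : J * (P ^ t * P ^ t) ≤ P ^ (e + 2 * t) := by
            rw [pow_add, hPP]
            exact Ideal.mul_mono hmemJ le_rfl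
          have hE2 : a (k + 1) ^ d - a k ^ d - b k ^ d ∈ P ^ (e + 2 * t) := hle1 hE
          have hBK : b k ^ d ∈ P ^ (min (d ^ k * t) (e + 2 * t) * d) := by
            rw [pow_mul]
            exact Ideal.pow_mem_pow ihk d
          rw [hsplit]
          refine Submodule.add_mem _ (Ideal.pow_le_pow_right ?_ hBK)
            (Ideal.pow_le_pow_right (min_le_right _ _) hE2)
          rcases min_cases (d ^ k * t) (e + 2 * t) with ⟨heq, _⟩ | ⟨heq, _⟩
          · rw [heq]
            have hdd : d ^ (k + 1) * t = d ^ k * t * d := by rw [pow_succ]; ring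
            exact le_trans (min_le_left _ _) (le_of_eq hdd)
          · rw [heq]
            exact le_trans (min_le_right _ _) (Nat.le_mul_of_pos_right _ hd.pos)
    have hfin : min (d ^ (m - 1) * t) (e + 2 * t) ≤ t + r := by
      have hmem := hchain (m - 1) hm1pos le_rfl
      have hspb : Ideal.span {b (m - 1)} ≠ 0 := by
        simp only [ne_eq, Ideal.span_singleton_eq_bot, Submodule.zero_eq_bot]
        exact hbne (m - 1) hm1lt
      have := (aux_count_ge_iff hP hspb (min (d ^ (m - 1) * t) (e + 2 * t))).mpr
        ((Ideal.span_singleton_le_iff_mem _).mpr hmem)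
      rwa [hnub] at this
    rcases le_or_gt (e + 2 * t) (d ^ (m - 1) * t) with hcase | hcase
    · exfalso
      rw [min_eq_right hcase, he_r] at hfin
      have hr1 : r ≤ (d - 1) * r := Nat.le_mul_of_pos_left r (by omega)
      have : r + 2 * t ≤ t + r := le_trans (Nat.add_le_add_right hr1 _) hfin
      omega
    · rw [min_eq_left hcase.le] at hfin
      have h2 : (d ^ (m - 1) - 1) * t ≤ r := by
        have hexpand : (d ^ (m - 1) - 1) * t + t = d ^ (m - 1) * t := by
          conv_rhs => rw [← Nat.sub_add_cancel hq1, Nat.add_mul, Nat.one_mul]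
        omega
      calc N * t = (d - 1) * ((d ^ (m - 1) - 1) * t) := by rw [hNdef]; ring
        _ ≤ (d - 1) * r := Nat.mul_le_mul_left _ h2
        _ = e := he_r.symm
  have hIN : I ^ N ∣ J := by
    rw [UniqueFactorizationMonoid.dvd_iff_normalizedFactors_le_normalizedFactors
      (pow_ne_zero N hIne) hJne, Multiset.le_iff_count]
    intro P
    rw [UniqueFactorizationMonoid.normalizedFactors_pow, Multiset.count_nsmul]
    by_cases hPI : P ∈ UniqueFactorizationMonoid.normalizedFactors I
    · exact hkey P (UniqueFactorizationMonoid.prime_of_normalized_factor P hPI)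
    · rw [Multiset.count_eq_zero_of_notMem hPI, Nat.mul_zero]
      exact Nat.zero_le _
  -- norms
  set n : ℕ := Module.finrank ℚ K with hndef
  have hn1 : 1 ≤ n := Module.finrank_pos
  have habsJ : Ideal.absNorm J = d ^ n := by
    rw [hJdef, Ideal.absNorm_span_singleton]
    have hcast : ((d : ℕ) : 𝓞 K) = algebraMap ℤ (𝓞 K) ((d : ℕ) : ℤ) := by
      simp
    rw [hcast, Algebra.norm_algebraMap_of_basis (Module.Free.chooseBasis ℤ (𝓞 K)),
      ← Module.finrank_eq_card_chooseBasisIndex, NumberField.RingOfIntegers.rank, ← hndef]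
    rw [Int.natAbs_pow]
    simp
  have hnN : n ≤ N := by
    set c' : K := algebraMap (𝓞 K) K c with hc'def
    have hc'ne : c' ≠ 0 := by
      rw [hc'def, ne_eq, NumberField.RingOfIntegers.coe_eq_zero_iff, ← ha1]
      exact ha1ne
    set Ap : ℕ → Polynomial ℚ := fun k => Nat.rec 0 (fun _ p => p ^ d + Polynomial.X) k
      with hApdef
    have hAp0 : Ap 0 = 0 := rfl
    have hApsucc : ∀ k, Ap (k + 1) = (Ap k) ^ d + Polynomial.X := fun k => rfl
    have hApeval : ∀ k, Polynomial.aeval c' (Ap k) = algebraMap (𝓞 K) K (a k) := by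
      intro k
      induction k with
      | zero => rw [hAp0, ha0]; simp
      | succ k ih =>
        rw [hApsucc, map_add, map_pow, ih, Polynomial.aeval_X, harec k, ha1, map_add,
          map_pow, hc'def]
    have hAp1 : Ap 1 = Polynomial.X := by
      have h := hApsucc 0
      rw [hAp0, zero_pow hd.ne_zero, zero_add] at h
      simpa using h
    have hApmonic : ∀ k, 1 ≤ k → (Ap k).Monic ∧ (Ap k).natDegree = d ^ (k - 1) := by
      intro k hk
      induction k with
      | zero => omega
      | succ k ih =>
        by_cases hk0 : k = 0
        · subst hk0
          rw [show (0:ℕ) + 1 = 1 from rfl, hAp1]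
          exact ⟨Polynomial.monic_X, by simp⟩
        · obtain ⟨ihm, ihd⟩ := ih (by omega)
          have hk1 : k - 1 + 1 = k := by omega
          have hdeg : (Ap k ^ d).natDegree = d ^ k := by
            rw [Polynomial.natDegree_pow, ihd, ← pow_succ', hk1]
          have hmon : (Ap k ^ d).Monic := ihm.pow _
          have hltn : 1 < d ^ k := Nat.one_lt_pow hk0 hd.one_lt
          have hlt : (Polynomial.X : Polynomial ℚ).degree < (Ap k ^ d).degree := by
            rw [Polynomial.degree_X, Polynomial.degree_eq_natDegree hmon.ne_zero, hdeg]
            exact_mod_cast hltn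
          constructor
          · rw [hApsucc]
            exact hmon.add_of_left hlt
          · have hre : Ap k ^ d + Polynomial.X = Ap k ^ d - (-Polynomial.X) := by ring
            rw [hApsucc, hre, Polynomial.natDegree_sub_eq_left_of_natDegree_lt, hdeg]
            · simp
            · rw [Polynomial.natDegree_neg, Polynomial.natDegree_X, hdeg]
              exact hltn
    have hApm := hApmonic m (by omega)
    have hApm1 := hApmonic (m - 1) hm1pos
    have hApm' := hApmonic (m + 1) (by omega)
    have hdeg1 : (Ap (m + 1)).natDegree = d ^ m := by
      have := hApm'.2
      simpa using this
    have hdeg2 : (Ap m).natDegree = d ^ (m - 1) := hApm.2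
    have hdeg3 : (Ap (m - 1)).natDegree = d ^ (m - 1 - 1) := hApm1.2
    set G : Polynomial ℚ :=
      ∑ j ∈ Finset.range d, (Ap m) ^ j * (Ap (m - 1)) ^ (d - 1 - j) with hGdef
    have hGid : G * (Ap m - Ap (m - 1)) = Ap m ^ d - Ap (m - 1) ^ d := geom_sum₂_mul _ _ d
    have hApmrec : Ap m = Ap (m - 1) ^ d + Polynomial.X := by
      conv_lhs => rw [← hm1succ]
    have hP1' : Ap (m + 1) - Ap m = Ap m ^ d - Ap (m - 1) ^ d := by
      rw [hApsucc m]
      nth_rewrite 2 [hApmrec]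
      ring
    have hP1 : Ap (m + 1) - Ap m = (Ap m - Ap (m - 1)) * G := by
      rw [hP1', ← hGid]
      ring
    have hdm : d ^ (m - 1) < d ^ m := Nat.pow_lt_pow_right hd.one_lt hm1lt
    have hdm2 : d ^ (m - 1 - 1) < d ^ (m - 1) := Nat.pow_lt_pow_right hd.one_lt (by omega)
    have hddm : d ≤ d ^ m := Nat.le_self_pow (by omega) d
    have hdegP1 : (Ap (m + 1) - Ap m).natDegree = d ^ m := by
      rw [Polynomial.natDegree_sub_eq_left_of_natDegree_lt
        (by rw [hdeg1, hdeg2]; exact hdm), hdeg1]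
    have hdegP2 : (Ap m - Ap (m - 1)).natDegree = d ^ (m - 1) := by
      rw [Polynomial.natDegree_sub_eq_left_of_natDegree_lt
        (by rw [hdeg2, hdeg3]; exact hdm2), hdeg2]
    have hP1ne : Ap (m + 1) - Ap m ≠ 0 := by
      intro h
      rw [h, Polynomial.natDegree_zero] at hdegP1
      omega
    have hP2ne : Ap m - Ap (m - 1) ≠ 0 := by
      intro h
      rw [h, Polynomial.natDegree_zero] at hdegP2
      have : d ≤ d ^ (m - 1) := Nat.le_self_pow (by omega) d
      omega
    have hGne : G ≠ 0 := by
      intro h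
      rw [h, mul_zero] at hP1
      exact hP1ne hP1
    have hG2 : d ^ m = d ^ (m - 1) + G.natDegree := by
      rw [← hdegP1, hP1, Polynomial.natDegree_mul hP2ne hGne, hdegP2]
    have hXdvdA : ∀ k, 1 ≤ k → Polynomial.X ∣ Ap k := by
      intro k hk
      induction k with
      | zero => omega
      | succ k ih =>
        by_cases hk0 : k = 0
        · subst hk0
          rw [show (0:ℕ) + 1 = 1 from rfl, hAp1]
        · rw [hApsucc]
          exact dvd_add (dvd_pow (ih (by omega)) hd.ne_zero) dvd_rfl
    have hXG : Polynomial.X ^ (d - 1) ∣ G := by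
      rw [hGdef]
      refine Finset.dvd_sum fun j hj => ?_
      simp only [Finset.mem_range] at hj
      have h3 : (Polynomial.X : Polynomial ℚ) ^ (d - 1)
          = Polynomial.X ^ j * Polynomial.X ^ (d - 1 - j) := by
        rw [← pow_add]
        congr 1
        omega
      rw [h3]
      exact mul_dvd_mul (pow_dvd_pow_of_dvd (hXdvdA m (by omega)) j)
        (pow_dvd_pow_of_dvd (hXdvdA (m - 1) hm1pos) _)
    obtain ⟨Hp, hHp⟩ := hXG
    have hHne : Hp ≠ 0 := by
      intro h
      rw [h, mul_zero] at hHp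
      exact hGne hHp
    have hdegH : G.natDegree = (d - 1) + Hp.natDegree := by
      rw [hHp, Polynomial.natDegree_mul (pow_ne_zero _ Polynomial.X_ne_zero) hHne,
        Polynomial.natDegree_X_pow]
    have hev1 : Polynomial.aeval c' (Ap (m + 1) - Ap m) = 0 := by
      rw [map_sub, hApeval (m+1), hApeval m, hper', sub_self]
    have hev2 : Polynomial.aeval c' (Ap m - Ap (m - 1)) ≠ 0 := by
      rw [map_sub, hApeval m, hApeval (m-1), ← map_sub, ne_eq,
        NumberField.RingOfIntegers.coe_eq_zero_iff, sub_eq_zero]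
      intro hh
      exact htail' (m - 1) hm1lt (by rw [hm1succ]; exact hh)
    have hevG : Polynomial.aeval c' G = 0 := by
      rw [hP1, map_mul] at hev1
      rcases mul_eq_zero.mp hev1 with h | h
      · exact absurd h hev2
      · exact h
    have hevH : Polynomial.aeval c' Hp = 0 := by
      rw [hHp, map_mul, map_pow, Polynomial.aeval_X] at hevG
      rcases mul_eq_zero.mp hevG with h | h
      · exact absurd h (pow_ne_zero _ hc'ne)
      · exact h
    have hminD : minpoly ℚ c' ∣ Hp := minpoly.dvd ℚ c' hevH
    have hdegmin : (minpoly ℚ c').natDegree ≤ Hp.natDegree :=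
      Polynomial.natDegree_le_of_dvd hminD hHne
    have hfr : n = (minpoly ℚ c').natDegree := by
      have hint : IsIntegral ℚ c' := IsIntegral.of_finite ℚ c'
      rw [hndef, ← IntermediateField.adjoin.finrank hint, hK, IntermediateField.finrank_top']
    have hqd : d ^ m = d ^ (m - 1) * d := by
      conv_lhs => rw [← hm1succ]
      rw [pow_succ]
    have hNid : N + d ^ (m - 1) + d = d ^ (m - 1) * d + 1 := by
      rw [hNdef]
      zify [hq1, (show 1 ≤ d by omega)]
      ring
    omega
  set A : ℕ := Ideal.absNorm I with hAdef
  have hA0 : A ≠ 0 := by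
    rw [hAdef, ne_eq, Ideal.absNorm_eq_zero_iff]
    rw [hIdef]
    simpa using ha1ne
  have hJnotTop : J ≠ ⊤ := by
    intro h
    have h1 : Ideal.absNorm J = 1 := Ideal.absNorm_eq_one_iff.mpr h
    rw [habsJ] at h1
    have : 2 ^ 1 ≤ d ^ n := Nat.pow_le_pow_left hd2 n |>.trans' (Nat.pow_le_pow_right (by omega) hn1)
    omega
  have hInotTop : I ≠ ⊤ := by
    obtain ⟨q, hqmax, hq⟩ := Ideal.exists_le_maximal J hJnotTop
    have ha1q : a 1 ∈ q := by
      refine aux_mem_prime hd a ha0 harec m hper' hqmax.isPrime ?_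
      exact hq (by rw [hJdef]; exact Ideal.mem_span_singleton_self _)
    intro hITop
    have hle : I ≤ q := by rw [hIdef]; exact (Ideal.span_singleton_le_iff_mem _).mpr ha1q
    rw [hITop] at hle
    exact hqmax.ne_top (top_le_iff.mp hle)
  have hA1 : A ≠ 1 := fun h => hInotTop (Ideal.absNorm_eq_one_iff.mp h)
  have hdvdAN : A ^ N ∣ d ^ n := by
    have h1 := map_dvd Ideal.absNorm hIN
    rwa [map_pow, habsJ, ← hAdef] at h1
  have hAd : A = d ∧ n = N := by
    have hAdn : A ∣ d ^ n := dvd_trans (dvd_pow_self A (by omega)) hdvdAN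
    obtain ⟨j, hjn, hAj⟩ := (Nat.dvd_prime_pow hd).mp hAdn
    have hj1 : 1 ≤ j := by
      rcases Nat.eq_zero_or_pos j with h | h
      · rw [h, pow_zero] at hAj; exact absurd hAj hA1
      · exact h
    have hjN : j * N ≤ n := by
      rw [hAj, ← pow_mul] at hdvdAN
      exact (Nat.pow_dvd_pow_iff_le_right hd.one_lt).mp hdvdAN
    have hj2 : j = 1 := by
      rcases Nat.lt_or_ge j 2 with h | h
      · omega
      · exfalso
        have := Nat.mul_le_mul_right N h
        omega
    refine ⟨by rw [hAj, hj2, pow_one], ?_⟩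
    have : N ≤ j * N := Nat.le_mul_of_pos_left N (by omega)
    omega
  obtain ⟨hAd', hnN'⟩ := hAd
  obtain ⟨C, hC⟩ := hIN
  have hCabs : Ideal.absNorm C = 1 := by
    have h1 : Ideal.absNorm J = Ideal.absNorm (I ^ N) * Ideal.absNorm C := by
      rw [hC, map_mul]
    rw [habsJ, map_pow, ← hAdef, hAd', hnN'] at h1
    have hne : (0:ℕ) < d ^ N := pow_pos hd.pos N
    have h2 : d ^ N * 1 = d ^ N * Ideal.absNorm C := by rw [Nat.mul_one]; exact h1
    exact (Nat.eq_of_mul_eq_mul_left hne h2).symm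
  have hJI : J = I ^ N := by
    rw [hC, Ideal.absNorm_eq_one_iff.mp hCabs, Ideal.mul_top]
  -- conclusions
  have hIprime : I.IsPrime := by
    refine Ideal.isPrime_of_irreducible_absNorm ?_
    rw [← hAdef, hAd']
    exact hd
  have hspanI : Ideal.span {a i} = I := hspan_i i hi
  refine ⟨by rw [hspanI]; exact hIprime, ?_, ?_⟩
  · rw [hspanI, hnN']
    exact hJI
  · intro q hqp hdq
    have hq0 : q ≠ ⊥ := by
      intro h
      rw [h] at hdq
      exact hdO (Ideal.mem_bot.mp hdq)
    have hqprime : Prime q := (Ideal.prime_iff_isPrime hq0).mpr hqp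
    have hqJ : q ∣ J := Ideal.dvd_iff_le.mpr
      (by rw [hJdef]; exact (Ideal.span_singleton_le_iff_mem _).mpr hdq)
    rw [hJI] at hqJ
    have hqI : q ∣ I := hqprime.dvd_of_dvd_pow hqJ
    have hImax : I.IsMaximal := hIprime.isMaximal (by rw [hIdef]; simpa using ha1ne)
    rw [hspanI]
    exact (hImax.eq_of_le hqp.ne_top (Ideal.le_of_dvd hqI)).symm
end
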